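/- Under the KKT-type conditions at a feasible x* with convex constraints, if min over feasible x of Z(x,x*) ≥ 0, where Z(x,x*) = (x-x*)ᵀ[Σᵢ (τ_i/g_i(x*))A_i - (τ_i f_i(x*)/g_i(x*)²)B_i](x-x*), then x* is Pareto optimal for the vector quadratic fractional problem. -/

import Mathlib

open Matrix

private lemma sum_dot {k n : ℕ} (v : Fin k → Fin n → ℝ) (w : Fin n → ℝ) :
    (∑ i, v i) ⬝ᵥ w = ∑ i, v i ⬝ᵥ w := by
  simp only [dotProduct, Finset.sum_apply, Finset.sum_mul]
  exact Finset.sum_comm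

private lemma sum_mulVec' {k n : ℕ} (M : Fin k → Matrix (Fin n) (Fin n) ℝ) (w : Fin n → ℝ) :
    (∑ i, M i) *ᵥ w = ∑ i, M i *ᵥ w := by
  funext j
  simp only [mulVec, Finset.sum_apply, Matrix.sum_apply]
  have := sum_dot (fun i => M i j) w
  simpa [dotProduct] using this

private lemma symm_dot {n : ℕ} (M : Matrix (Fin n) (Fin n) ℝ) (hM : M.IsSymm)
    (u v : Fin n → ℝ) : u ⬝ᵥ (M *ᵥ v) = v ⬝ᵥ (M *ᵥ u) := by
  rw [dotProduct_mulVec, ← mulVec_transpose, hM.eq, dotProduct_comm]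

private lemma quad_expand {n : ℕ} (M : Matrix (Fin n) (Fin n) ℝ) (hM : M.IsSymm)
    (x xs : Fin n → ℝ) :
    x ⬝ᵥ (M *ᵥ x) - xs ⬝ᵥ (M *ᵥ xs)
      = ((2 : ℝ) • (M *ᵥ xs)) ⬝ᵥ (x - xs) + (x - xs) ⬝ᵥ (M *ᵥ (x - xs)) := by
  have h1 : xs ⬝ᵥ (M *ᵥ x) = x ⬝ᵥ (M *ᵥ xs) := symm_dot M hM xs x
  have h2 : (M *ᵥ xs) ⬝ᵥ x = x ⬝ᵥ (M *ᵥ xs) := dotProduct_comm _ _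
  have h3 : (M *ᵥ xs) ⬝ᵥ xs = xs ⬝ᵥ (M *ᵥ xs) := dotProduct_comm _ _
  simp only [mulVec_sub, dotProduct_sub, sub_dotProduct, smul_dotProduct, smul_eq_mul,
    dotProduct_smul]
  linarith

theorem stmt_5 {n m ℓ : ℕ}
    (A B : Fin m → Matrix (Fin n) (Fin n) ℝ)
    (a b : Fin m → Fin n → ℝ) (abar bbar : Fin m → ℝ)
    (hA : ∀ i, (A i).IsSymm) (hB : ∀ i, (B i).PosSemidef)
    (f g : Fin m → (Fin n → ℝ) → ℝ)
    (hf : ∀ i x, f i x = x ⬝ᵥ (A i *ᵥ x) + a i ⬝ᵥ x + abar i)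
    (hg : ∀ i x, g i x = x ⬝ᵥ (B i *ᵥ x) + b i ⬝ᵥ x + bbar i)
    (hgpos : ∀ i x, 0 < g i x)
    (h : Fin ℓ → (Fin n → ℝ) → ℝ) (hgrad : Fin ℓ → (Fin n → ℝ) → (Fin n → ℝ))
    (hconv : ∀ j x y, h j x - h j y ≥ (hgrad j y) ⬝ᵥ (x - y))
    (S : Set (Fin n → ℝ)) (hS : S = {x | ∀ j, h j x ≤ 0})
    (xs : Fin n → ℝ) (hxs : xs ∈ S)
    (τ : Fin m → ℝ) (lam : Fin ℓ → ℝ)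
    (hτ : ∀ i, 0 < τ i) (hlam : ∀ j, 0 ≤ lam j)
    (hstat : ∑ i, τ i •
        (((g i xs) ^ 2)⁻¹ •
          ((g i xs) • ((2 : ℝ) • (A i *ᵥ xs) + a i) - (f i xs) • ((2 : ℝ) • (B i *ᵥ xs) + b i)))
        + ∑ j, lam j • hgrad j xs = 0)
    (hcomp : ∑ j, lam j * h j xs = 0)
    (hkey : ∀ x ∈ S, 0 ≤ (x - xs) ⬝ᵥ
        ((∑ i, ((τ i / g i xs) • A i - (τ i * f i xs / (g i xs) ^ 2) • B i)) *ᵥ (x - xs))) :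
    ¬ ∃ x ∈ S, (∀ i, f i x / g i x ≤ f i xs / g i xs) ∧
        (∃ i, f i x / g i x < f i xs / g i xs) := by
  rintro ⟨x, hxS, hle, i0, hlt⟩
  have hBsymm : ∀ i, (B i).IsSymm := fun i => by
    have := (hB i).isHermitian
    rwa [Matrix.IsHermitian, conjTranspose_eq_transpose_of_trivial] at this
  set y : Fin n → ℝ := x - xs with hy
  -- per-index difference identities
  have hfd : ∀ i, f i x - f i xs
      = ((2 : ℝ) • (A i *ᵥ xs) + a i) ⬝ᵥ y + y ⬝ᵥ (A i *ᵥ y) := by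
    intro i
    have := quad_expand (A i) (hA i) x xs
    simp only [hf, add_dotProduct]
    have hax : a i ⬝ᵥ x - a i ⬝ᵥ xs = a i ⬝ᵥ y := by
      simp [hy, dotProduct_sub]
    have hay : a i ⬝ᵥ y = y ⬝ᵥ a i := dotProduct_comm _ _
    linarith [this]
  have hgd : ∀ i, g i x - g i xs
      = ((2 : ℝ) • (B i *ᵥ xs) + b i) ⬝ᵥ y + y ⬝ᵥ (B i *ᵥ y) := by
    intro i
    have := quad_expand (B i) (hBsymm i) x xs
    simp only [hg, add_dotProduct]
    have hbx : b i ⬝ᵥ x - b i ⬝ᵥ xs = b i ⬝ᵥ y := by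
      simp [hy, dotProduct_sub]
    linarith [this]
  -- E i
  set E : Fin m → ℝ := fun i =>
    (τ i / g i xs) * (f i x - f i xs) - (τ i * f i xs / (g i xs) ^ 2) * (g i x - g i xs)
    with hE
  -- Step 1: each E i equals grad term + quad term
  have hEeq : ∀ i, E i
      = (τ i • (((g i xs) ^ 2)⁻¹ •
          ((g i xs) • ((2 : ℝ) • (A i *ᵥ xs) + a i) - (f i xs) • ((2 : ℝ) • (B i *ᵥ xs) + b i)))) ⬝ᵥ y
        + y ⬝ᵥ (((τ i / g i xs) • A i - (τ i * f i xs / (g i xs) ^ 2) • B i) *ᵥ y) := by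
    intro i
    have hgne : g i xs ≠ 0 := ne_of_gt (hgpos i xs)
    simp only [hE, hfd i, hgd i, smul_dotProduct, sub_dotProduct, smul_eq_mul,
      sub_mulVec, dotProduct_sub, smul_mulVec, dotProduct_smul]
    field_simp
    ring
  -- Step 2: sum of quad terms = key quantity
  have hsum2 : ∑ i, y ⬝ᵥ (((τ i / g i xs) • A i - (τ i * f i xs / (g i xs) ^ 2) • B i) *ᵥ y)
      = y ⬝ᵥ ((∑ i, ((τ i / g i xs) • A i - (τ i * f i xs / (g i xs) ^ 2) • B i)) *ᵥ y) := by
    rw [sum_mulVec']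
    rw [dotProduct_comm, sum_dot]
    exact Finset.sum_congr rfl fun i _ => dotProduct_comm _ _
  -- Step 3: sum of grad terms dotted with y
  have hsum1 : (∑ i, τ i • (((g i xs) ^ 2)⁻¹ •
          ((g i xs) • ((2 : ℝ) • (A i *ᵥ xs) + a i) - (f i xs) • ((2 : ℝ) • (B i *ᵥ xs) + b i)))) ⬝ᵥ y
      = - ∑ j, lam j * (hgrad j xs ⬝ᵥ y) := by
    have h0 : (∑ i, τ i • (((g i xs) ^ 2)⁻¹ •
          ((g i xs) • ((2 : ℝ) • (A i *ᵥ xs) + a i) - (f i xs) • ((2 : ℝ) • (B i *ᵥ xs) + b i))))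
        = - ∑ j, lam j • hgrad j xs := by
      linear_combination hstat
    rw [h0, neg_dotProduct, sum_dot]
    simp [smul_dotProduct]
  -- the convexity / feasibility bound
  have hxfeas : ∀ j, h j x ≤ 0 := by rw [hS] at hxS; exact hxS
  have hgradle : ∀ j, hgrad j xs ⬝ᵥ y ≤ h j x - h j xs := fun j => hconv j x xs
  have hub : - ∑ j, lam j * (hgrad j xs ⬝ᵥ y) ≥ 0 := by
    have h1 : ∑ j, lam j * (hgrad j xs ⬝ᵥ y) ≤ ∑ j, lam j * (h j x - h j xs) := by
      apply Finset.sum_le_sum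
      intro j _
      exact mul_le_mul_of_nonneg_left (hgradle j) (hlam j)
    have h2 : ∑ j, lam j * (h j x - h j xs) = ∑ j, lam j * h j x - ∑ j, lam j * h j xs := by
      rw [← Finset.sum_sub_distrib]; ring_nf
    have h3 : ∑ j, lam j * h j x ≤ 0 := by
      apply Finset.sum_nonpos
      intro j _
      exact mul_nonpos_of_nonneg_of_nonpos (hlam j) (hxfeas j)
    linarith [hcomp, h1, h2, h3]
  -- total sum nonneg
  have hkey' := hkey x hxS
  have hsumE : 0 ≤ ∑ i, E i := by
    calc (0:ℝ) ≤ - ∑ j, lam j * (hgrad j xs ⬝ᵥ y)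
          + y ⬝ᵥ ((∑ i, ((τ i / g i xs) • A i - (τ i * f i xs / (g i xs) ^ 2) • B i)) *ᵥ y) := by
            linarith [hub, hkey']
      _ = ∑ i, E i := by
          rw [← hsum1, ← hsum2, sum_dot, ← Finset.sum_add_distrib]
          exact (Finset.sum_congr rfl fun i _ => (hEeq i).symm)
  -- but each E i ≤ 0 with one strict
  have hEle : ∀ i, f i x / g i x ≤ f i xs / g i xs → E i ≤ 0 := by
    intro i hi
    have hx' := hgpos i x
    have hs' := hgpos i xs
    have hmul : f i x * g i xs ≤ f i xs * g i x := (div_le_div_iff₀ hx' hs').mp hi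
    have hτi := (hτ i).le
    have : E i = τ i * (f i x * g i xs - f i xs * g i x) / (g i xs)^2 := by
      simp only [hE]; field_simp; ring
    rw [this]
    apply div_nonpos_of_nonpos_of_nonneg
    · nlinarith
    · positivity
  have hElt : E i0 < 0 := by
    have hx' := hgpos i0 x
    have hs' := hgpos i0 xs
    have hmul : f i0 x * g i0 xs < f i0 xs * g i0 x := (div_lt_div_iff₀ hx' hs').mp hlt
    have : E i0 = τ i0 * (f i0 x * g i0 xs - f i0 xs * g i0 x) / (g i0 xs)^2 := by
      simp only [hE]; field_simp; ring
    rw [this]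
    apply div_neg_of_neg_of_pos
    · nlinarith [hτ i0]
    · positivity
  have : ∑ i, E i < 0 := by
    have := Finset.sum_lt_sum (f := E) (g := fun _ => (0:ℝ))
      (fun i _ => hEle i (hle i)) ⟨i0, Finset.mem_univ i0, hElt⟩
    simpa using this
  linarith
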